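/- Let C be a complete lattice and let f : C → ℘◇(C) be an EM-monotone multivalued function (each value f(c) contains both its infimum and its supremum). Then f has both a least and a greatest fixed point, with lfp(f) = ⋁_{α ∈ Ord} f∧^α(⊥) and gfp(f) = ⋀_{α ∈ Ord} f∨^α(⊤), where f∧(c) = ⋀ f(c) and f∨(c) = ⋁ f(c). -/

import Mathlib

universe u

/-- Smyth preorder on subsets. -/
def SmythLE {β : Type u} [LE β] (X Y : Set β) : Prop := ∀ y ∈ Y, ∃ x ∈ X, x ≤ y

/-- Hoare preorder on subsets. -/
def HoareLE {β : Type u} [LE β] (X Y : Set β) : Prop := ∀ x ∈ X, ∃ y ∈ Y, x ≤ y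

/-- Egli-Milner preorder on subsets. -/
def EgliMilnerLE {β : Type u} [LE β] (X Y : Set β) : Prop := SmythLE X Y ∧ HoareLE X Y

/-- Upward transfinite iterates of `g` starting from `⊥` (suprema at limits). -/
noncomputable def upIter {β : Type u} [CompleteLattice β] (g : β → β) (o : Ordinal.{u}) : β :=
  Ordinal.limitRecOn (motive := fun _ => β) o ⊥ (fun _ ih => g ih)
    (fun o _ ih => ⨆ b : Set.Iio o, ih b.1 b.2)

/-- Downward transfinite iterates of `g` starting from `⊤` (infima at limits). -/
noncomputable def downIter {β : Type u} [CompleteLattice β] (g : β → β) (o : Ordinal.{u}) : β :=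
  Ordinal.limitRecOn (motive := fun _ => β) o ⊤ (fun _ ih => g ih)
    (fun o _ ih => ⨅ b : Set.Iio o, ih b.1 b.2)

open Ordinal Order

section aux
variable {β : Type u} [CompleteLattice β] {g : β → β}

theorem upIter_zero (g : β → β) : upIter g 0 = ⊥ := Ordinal.limitRecOn_zero ..

theorem upIter_succ (g : β → β) (o : Ordinal.{u}) :
    upIter g (succ o) = g (upIter g o) := Ordinal.limitRecOn_succ ..

theorem upIter_limit (g : β → β) {o : Ordinal.{u}} (h : IsSuccLimit o) :
    upIter g o = ⨆ b : Set.Iio o, upIter g b.1 := Ordinal.limitRecOn_limit _ _ _ _ h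

theorem downIter_eq_dual (g : β → β) (o : Ordinal.{u}) :
    downIter g o = OrderDual.ofDual (upIter (β := βᵒᵈ) g o) := rfl

theorem upIter_le_prefix (hg : Monotone g) {x : β} (hx : g x ≤ x) :
    ∀ o, upIter g o ≤ x := by
  intro o
  induction o using Ordinal.induction with
  | h o IH =>
    rcases Ordinal.zero_or_succ_or_isSuccLimit o with h0 | ⟨a, rfl⟩ | hl
    · subst h0; rw [upIter_zero]; exact bot_le
    · rw [upIter_succ]
      exact le_trans (hg (IH a (lt_succ a))) hx
    · rw [upIter_limit g hl]
      exact iSup_le fun b => IH b.1 b.2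

theorem upIter_mono (hg : Monotone g) :
    ∀ o, upIter g o ≤ g (upIter g o) ∧ ∀ p ≤ o, upIter g p ≤ upIter g o := by
  intro o
  induction o using Ordinal.induction with
  | h o IH =>
    rcases Ordinal.zero_or_succ_or_isSuccLimit o with h0 | ⟨a, rfl⟩ | hl
    · subst h0
      rw [upIter_zero]
      refine ⟨bot_le, fun p hp => ?_⟩
      rw [nonpos_iff_eq_zero.mp hp, upIter_zero]
    · have ha := IH a (lt_succ a)
      rw [upIter_succ]
      refine ⟨hg ha.1, fun p hp => ?_⟩
      rcases eq_or_lt_of_le hp with rfl | hlt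
      · rw [upIter_succ]
      · exact le_trans (ha.2 p (lt_succ_iff.mp hlt)) ha.1
    · rw [upIter_limit g hl]
      constructor
      · refine iSup_le fun b => ?_
        have hsb : succ b.1 < o := hl.succ_lt b.2
        have h1 : upIter g b.1 ≤ g (upIter g b.1) := (IH b.1 b.2).1
        have h2 : upIter g b.1 ≤ ⨆ c : Set.Iio o, upIter g c.1 :=
          le_iSup (fun c : Set.Iio o => upIter g c.1) b
        exact le_trans h1 (hg h2)
      · intro p hp
        rcases eq_or_lt_of_le hp with rfl | hlt
        · rw [upIter_limit g hl]
        · exact le_iSup (fun c : Set.Iio o => upIter g c.1) ⟨p, hlt⟩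

/-- The supremum of the upward iterates is the least fixed point of `g`. -/
theorem upIter_lfp (hg : Monotone g) :
    g (⨆ o : Ordinal.{u}, upIter g o) = (⨆ o : Ordinal.{u}, upIter g o) ∧
    ∀ x, g x ≤ x → (⨆ o : Ordinal.{u}, upIter g o) ≤ x := by
  have hninj := not_injective_of_ordinal (upIter g)
  simp only [Function.Injective, not_forall] at hninj
  obtain ⟨o, o', heq, hne⟩ := hninj
  wlog hlt : o < o' generalizing o o'
  · exact this o' o heq.symm (Ne.symm hne) ((lt_or_gt_of_ne hne).resolve_left hlt)
  -- upIter g o is a fixed point of g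
  have hfix : g (upIter g o) = upIter g o := by
    apply le_antisymm
    · calc g (upIter g o) = upIter g (succ o) := (upIter_succ g o).symm
        _ ≤ upIter g o' := (upIter_mono hg o').2 _ (succ_le_of_lt hlt)
        _ = upIter g o := heq.symm
    · exact (upIter_mono hg o).1
  have hbound : ∀ p, upIter g p ≤ upIter g o := upIter_le_prefix hg hfix.le
  have hsup : (⨆ p : Ordinal.{u}, upIter g p) = upIter g o :=
    le_antisymm (iSup_le hbound) (le_iSup (upIter g) o)
  rw [hsup]
  exact ⟨hfix, fun x hx => upIter_le_prefix hg hx o⟩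

end aux

/-- an EM-monotone multivalued function `f : C → ℘◇(C)` on a complete
lattice has both a least and a greatest fixed point, with
`lfp(f) = ⋁_{α ∈ Ord} f∧^α(⊥)` and `gfp(f) = ⋀_{α ∈ Ord} f∨^α(⊤)`,
where `f∧ c = ⋀ f c` and `f∨ c = ⋁ f c`. -/
theorem multivalued_lfp_and_gfp {β : Type u} [CompleteLattice β] (f : β → Set β)
    (hmeet : ∀ c, sInf (f c) ∈ f c) (hjoin : ∀ c, sSup (f c) ∈ f c)
    (hmono : ∀ x y : β, x ≤ y → EgliMilnerLE (f x) (f y)) :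
    IsLeast {x | x ∈ f x} (⨆ o : Ordinal.{u}, upIter (fun c => sInf (f c)) o) ∧
    IsGreatest {x | x ∈ f x} (⨅ o : Ordinal.{u}, downIter (fun c => sSup (f c)) o) := by
  constructor
  · set g : β → β := fun c => sInf (f c) with hg_def
    have hg : Monotone g := by
      intro x y hxy
      exact le_sInf fun b hb => (hmono x y hxy).1 b hb |>.elim fun a ⟨ha, hab⟩ =>
        le_trans (sInf_le ha) hab
    obtain ⟨hfix, hleast⟩ := upIter_lfp hg
    set a := ⨆ o : Ordinal.{u}, upIter g o
    constructor
    · show a ∈ f a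
      have h2 := hmeet a
      rwa [show sInf (f a) = a from hfix] at h2
    · intro x hx
      exact hleast x (sInf_le hx)
  · set g : β → β := fun c => sSup (f c) with hg_def
    have hg : @Monotone βᵒᵈ βᵒᵈ _ _ g := by
      intro x y hxy
      exact sSup_le_sSup_of_isCofinalFor fun b hb => (hmono y x hxy).2 b hb
    obtain ⟨hfix, hleast⟩ := upIter_lfp (β := βᵒᵈ) hg
    have hd : (⨅ o : Ordinal.{u}, downIter g o) =
        OrderDual.ofDual (⨆ o : Ordinal.{u}, upIter (β := βᵒᵈ) g o) := rfl
    rw [hd]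
    set a := ⨆ o : Ordinal.{u}, upIter (β := βᵒᵈ) g o
    constructor
    · show OrderDual.ofDual a ∈ f (OrderDual.ofDual a)
      have h2 := hjoin (OrderDual.ofDual a)
      rwa [show sSup (f (OrderDual.ofDual a)) = OrderDual.ofDual a from hfix] at h2
    · intro x hx
      exact hleast (OrderDual.toDual x) (le_sSup hx : (x : β) ≤ g x)
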